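/- The closed real intervals Set.Icc (ε·α(n,k) − r(n)) (ε·α(n,k) + r(n)), for ε ∈ {1, −1}, n ≥ 1 and 0 ≤ k ≤ 2^(n−1)−1, are pairwise disjoint: any two such intervals with distinct parameter triples (ε,n,k) have empty intersection. -/

import Mathlib

noncomputable section

/-- `s k = Σᵢ 2·tᵢ·3ⁱ` where `k = Σᵢ tᵢ·2ⁱ` is the binary expansion of `k`;
equivalently `s 0 = 0`, `s (2j) = 3·(s j)`, `s (2j+1) = 3·(s j) + 2`. -/
def s : ℕ → ℕ
  | 0 => 0
  | k + 1 =>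
    if (k + 1) % 2 = 0 then 3 * s ((k + 1) / 2)
    else 3 * s ((k + 1) / 2) + 2
decreasing_by all_goals (simp_wf; omega)

/-- The midpoint of the middle third removed at stage `n` from the `k`-th interval of
stage `n−1` of the middle-thirds construction on `[1,2]`. -/
def alphaC (n k : ℕ) : ℝ := 1 + (3 * s k + 1) / 3 ^ n + 1 / (2 * 3 ^ n)

/-- The common radius of the half-circles at stage `n`. -/
def radC (n : ℕ) : ℝ := 1 / (4 * 3 ^ n)

lemma s_formula (k : ℕ) : s k = 3 * s (k / 2) + 2 * (k % 2) := by
  cases k with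
  | zero => simp [s]
  | succ m =>
    rw [s]
    rcases Nat.mod_two_eq_zero_or_one (m+1) with h | h <;> simp [h]

lemma s_no_one (j k : ℕ) : (s k / 3 ^ j) % 3 ≠ 1 := by
  induction j generalizing k with
  | zero =>
    have h1 := s_formula k
    have h2 : k % 2 < 2 := Nat.mod_lt _ (by norm_num)
    simp only [pow_zero, Nat.div_one]
    omega
  | succ j ih =>
    have h1 := s_formula k
    have hdiv : s k / 3 = s (k / 2) := by omega
    have h3 : s k / 3 ^ (j + 1) = s (k / 2) / 3 ^ j := by
      rw [pow_succ, mul_comm, ← Nat.div_div_eq_div_mul, hdiv]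
    rw [h3]
    exact ih (k / 2)

lemma s_strictMono : StrictMono s := by
  have H : ∀ m, ∀ k < m, s k < s m := by
    intro m
    induction m using Nat.strong_induction_on with
    | _ m ih =>
      intro k hk
      have h1 := s_formula k
      have h2 := s_formula m
      rcases Nat.lt_or_ge (k / 2) (m / 2) with h | h
      · have hs : s (k/2) < s (m/2) := ih (m / 2) (by omega) (k / 2) h
        have hk2 : k % 2 < 2 := Nat.mod_lt _ (by norm_num)
        omega
      · have hkm : k / 2 = m / 2 := by omega
        have hp : k % 2 = 0 ∧ m % 2 = 1 := by omega
        rw [hkm] at h1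
        omega
  exact fun a b h => H b a h

lemma mem_interval (n k : ℕ) (y : ℝ) (h1 : alphaC n k - radC n ≤ y)
    (h2 : y ≤ alphaC n k + radC n) :
    3 * (s k : ℝ) + 1 < (y - 1) * 3 ^ n ∧ (y - 1) * 3 ^ n < 3 * (s k : ℝ) + 2 := by
  have hp : (0:ℝ) < 3 ^ n := by positivity
  unfold alphaC radC at h1 h2
  have e1 : (3 * (s k : ℝ) + 1) / 3 ^ n * 3 ^ n = 3 * (s k : ℝ) + 1 :=
    div_mul_cancel₀ _ (ne_of_gt hp)
  have e2 : (1 : ℝ) / (2 * 3 ^ n) * 3 ^ n = 1 / 2 := by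
    field_simp
  have e3 : (1 : ℝ) / (4 * 3 ^ n) * 3 ^ n = 1 / 4 := by
    field_simp
  have hu := mul_le_mul_of_nonneg_right
    (show (3 * (s k : ℝ) + 1) / 3 ^ n + 1 / (2 * 3 ^ n) - 1 / (4 * 3 ^ n) ≤ y - 1 by linarith)
    hp.le
  have hv := mul_le_mul_of_nonneg_right
    (show y - 1 ≤ (3 * (s k : ℝ) + 1) / 3 ^ n + 1 / (2 * 3 ^ n) + 1 / (4 * 3 ^ n) by linarith)
    hp.le
  constructor <;> nlinarith [e1, e2, e3, hu, hv]

lemma key (n₁ k₁ n₂ k₂ : ℕ) (hn : n₁ ≤ n₂) (y : ℝ)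
    (ha1 : alphaC n₁ k₁ - radC n₁ ≤ y) (ha2 : y ≤ alphaC n₁ k₁ + radC n₁)
    (hb1 : alphaC n₂ k₂ - radC n₂ ≤ y) (hb2 : y ≤ alphaC n₂ k₂ + radC n₂) :
    n₁ = n₂ ∧ k₁ = k₂ := by
  obtain ⟨A1, A2⟩ := mem_interval n₁ k₁ y ha1 ha2
  obtain ⟨B1, B2⟩ := mem_interval n₂ k₂ y hb1 hb2
  obtain ⟨d, rfl⟩ : ∃ d, n₂ = n₁ + d := ⟨n₂ - n₁, by omega⟩
  have hdp : (0:ℝ) < 3 ^ d := by positivity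
  have hw : (y - 1) * 3 ^ (n₁ + d) = (y - 1) * 3 ^ n₁ * 3 ^ d := by
    rw [pow_add, mul_assoc]
  have A1' : (3 * (s k₁ : ℝ) + 1) * 3 ^ d < (y - 1) * 3 ^ (n₁ + d) := by
    rw [hw]; exact mul_lt_mul_of_pos_right A1 hdp
  have A2' : (y - 1) * 3 ^ (n₁ + d) < (3 * (s k₁ : ℝ) + 2) * 3 ^ d := by
    rw [hw]; exact mul_lt_mul_of_pos_right A2 hdp
  have C1 : (3 * (s k₁ : ℝ) + 1) * 3 ^ d < 3 * (s k₂ : ℝ) + 2 := lt_trans A1' B2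
  have C2 : (3 * (s k₂ : ℝ) + 1) < (3 * (s k₁ : ℝ) + 2) * 3 ^ d := lt_trans B1 A2'
  have N1 : (3 * s k₁ + 1) * 3 ^ d < 3 * s k₂ + 2 := by exact_mod_cast C1
  have N2 : 3 * s k₂ + 1 < (3 * s k₁ + 2) * 3 ^ d := by exact_mod_cast C2
  rcases Nat.eq_zero_or_pos d with h0 | h0
  · subst h0
    simp only [pow_zero, mul_one] at N1 N2
    have : s k₁ = s k₂ := by omega
    exact ⟨by omega, s_strictMono.injective this⟩
  · exfalso
    have hq : (3 * s k₂ + 1) / 3 ^ d = 3 * s k₁ + 1 := by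
      have hle : (3 * s k₁ + 1) * 3 ^ d ≤ 3 * s k₂ + 1 := by omega
      have hlt : 3 * s k₂ + 1 < Nat.succ (3 * s k₁ + 1) * 3 ^ d := by
        have he : Nat.succ (3 * s k₁ + 1) * 3 ^ d = (3 * s k₁ + 2) * 3 ^ d := by
          rw [Nat.succ_eq_add_one]
        omega
      exact Nat.div_eq_of_lt_le hle hlt
    have hd3 : (3:ℕ) ^ d = 3 * 3 ^ (d - 1) := by
      conv_lhs => rw [show d = 1 + (d - 1) by omega]
      rw [pow_add, pow_one]
    have hq2 : (3 * s k₂ + 1) / 3 ^ d = s k₂ / 3 ^ (d - 1) := by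
      rw [hd3, ← Nat.div_div_eq_div_mul]
      congr 1
      omega
    have := s_no_one (d - 1) k₂
    rw [← hq2, hq] at this
    omega

lemma radC_lt_alphaC (n k : ℕ) : radC n < alphaC n k := by
  have hp : (0:ℝ) < 3 ^ n := by positivity
  have h3 : (1:ℝ) ≤ 3 ^ n := one_le_pow₀ (by norm_num)
  have h1 : radC n ≤ 1 / 4 := by
    unfold radC
    rw [div_le_div_iff₀ (by positivity) (by norm_num)]
    linarith
  have h2 : (1:ℝ) ≤ alphaC n k := by
    unfold alphaC
    have : (0:ℝ) ≤ (3 * s k + 1) / 3 ^ n := by positivity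
    have : (0:ℝ) ≤ 1 / (2 * 3 ^ n) := by positivity
    linarith
  linarith

theorem stmt_9 :
    ∀ ε₁ ε₂ : ℝ, (ε₁ = 1 ∨ ε₁ = -1) → (ε₂ = 1 ∨ ε₂ = -1) →
    ∀ n₁ k₁ n₂ k₂ : ℕ, 1 ≤ n₁ → k₁ < 2 ^ (n₁ - 1) → 1 ≤ n₂ → k₂ < 2 ^ (n₂ - 1) →
    (ε₁, n₁, k₁) ≠ (ε₂, n₂, k₂) →
    Disjoint (Set.Icc (ε₁ * alphaC n₁ k₁ - radC n₁) (ε₁ * alphaC n₁ k₁ + radC n₁))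
      (Set.Icc (ε₂ * alphaC n₂ k₂ - radC n₂) (ε₂ * alphaC n₂ k₂ + radC n₂)) := by
  intro ε₁ ε₂ hε₁ hε₂ n₁ k₁ n₂ k₂ hn₁ hk₁ hn₂ hk₂ hne
  by_contra hcon
  rw [Set.not_disjoint_iff] at hcon
  obtain ⟨x, ⟨hx1, hx2⟩, ⟨hx3, hx4⟩⟩ := hcon
  have hr1 := radC_lt_alphaC n₁ k₁
  have hr2 := radC_lt_alphaC n₂ k₂
  have hεeq : ε₁ = ε₂ := by
    rcases hε₁ with rfl | rfl <;> rcases hε₂ with rfl | rfl <;> [rfl; skip; skip; rfl] <;>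
      simp only [one_mul, neg_one_mul] at hx1 hx2 hx3 hx4 <;> linarith
  subst hεeq
  have hy : ∃ y : ℝ, (alphaC n₁ k₁ - radC n₁ ≤ y ∧ y ≤ alphaC n₁ k₁ + radC n₁) ∧
      (alphaC n₂ k₂ - radC n₂ ≤ y ∧ y ≤ alphaC n₂ k₂ + radC n₂) := by
    rcases hε₁ with rfl | rfl
    · exact ⟨x, ⟨by linarith, by linarith⟩, ⟨by linarith, by linarith⟩⟩
    · exact ⟨-x, ⟨by linarith, by linarith⟩, ⟨by linarith, by linarith⟩⟩
  obtain ⟨y, ⟨ha1, ha2⟩, ⟨hb1, hb2⟩⟩ := hy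
  rcases Nat.le_total n₁ n₂ with h | h
  · obtain ⟨hn, hk⟩ := key n₁ k₁ n₂ k₂ h y ha1 ha2 hb1 hb2
    exact hne (by rw [hn, hk])
  · obtain ⟨hn, hk⟩ := key n₂ k₂ n₁ k₁ h y hb1 hb2 ha1 ha2
    exact hne (by rw [hn, hk])
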